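/- Let 𝒪 be an infinite order ideal in P = K[x_0,…,x_n] and let G be a homogeneous ∂𝒪-prebasis. Then G is a homogeneous ∂𝒪-basis if and only if for every d ≥ mindeg(∂𝒪) − 1 and all 0 ≤ r < s ≤ n, the graded formal multiplication matrices of G satisfy Χ_r^{(d+1)}·Χ_s^{(d)} = Χ_s^{(d+1)}·Χ_r^{(d)}. -/

import Mathlib

open MvPolynomial

namespace Border

/-- A term of `K[x_0, …, x_n]`, identified with its exponent vector. -/
abbrev Term (n : ℕ) := Fin (n + 1) →₀ ℕ

variable {n : ℕ}

/-- The (standard) degree of a term. -/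
def tdeg (m : Term n) : ℕ := ∑ i, m i

/-- An order ideal: a nonempty set of terms closed under divisors. -/
def IsOrderIdeal (O : Set (Term n)) : Prop :=
  O.Nonempty ∧ ∀ τ ∈ O, ∀ τ' : Term n, τ' ≤ τ → τ' ∈ O

/-- The border `∂𝒪 = (x_0·𝒪 ∪ ⋯ ∪ x_n·𝒪) ∖ 𝒪`. -/
def border (O : Set (Term n)) : Set (Term n) :=
  {σ | σ ∉ O ∧ ∃ r : Fin (n + 1), ∃ τ ∈ O, σ = τ + Finsupp.single r 1}

/-- Multiplicative set of a border term `σ`, with respect to a labeling `lab` of the border: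
`𝒯_σ = {η : σ' ∤ η·σ for every border term σ' with a larger label}`. -/
def mulSet (O : Set (Term n)) (lab : Term n → ℕ) (σ : Term n) : Set (Term n) :=
  {η | ∀ σ' ∈ border O, lab σ < lab σ' → ¬ σ' ≤ η + σ}

/-- The cone `C(σ) = {η·σ : η ∈ 𝒯_σ}`. -/
def cone (O : Set (Term n)) (lab : Term n → ℕ) (σ : Term n) : Set (Term n) :=
  (fun η => η + σ) '' mulSet O lab σ

/-- A labeling of the border which is injective and ordered increasingly by degree. -/
def DegOrderedLabeling (O : Set (Term n)) (lab : Term n → ℕ) : Prop :=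
  Set.InjOn lab (border O) ∧
    ∀ σ ∈ border O, ∀ σ' ∈ border O, lab σ < lab σ' → tdeg σ ≤ tdeg σ'

/-- Iterated border closures: `∂⁰𝒪 := 𝒪`, and the `(k+1)`-st closure adds the border. -/
def borderClosure (O : Set (Term n)) : ℕ → Set (Term n)
  | 0 => O
  | k + 1 => borderClosure O k ∪ border (borderClosure O k)

/-- The index `ind_𝒪(τ)`: the least `k` with `τ ∈ ∂^k𝒪`. -/
noncomputable def ind (O : Set (Term n)) (τ : Term n) : ℕ :=
  sInf {k | τ ∈ borderClosure O k}

/-- Degree-`d` part of a set of terms. -/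
def Od (O : Set (Term n)) (d : ℕ) : Set (Term n) := {τ | τ ∈ O ∧ tdeg τ = d}

variable {K : Type*} [Field K]

/-- The index of a nonzero polynomial: the maximal index of a term of its support. -/
noncomputable def indP (O : Set (Term n)) (f : MvPolynomial (Fin (n + 1)) K) : ℕ :=
  f.support.sup (ind O)

/-- A homogeneous `∂𝒪`-prebasis: a family `g σ = σ - Σ_{τ ∈ 𝒪_{deg σ}} c_{στ} τ`. -/
def IsPrebasis (O : Set (Term n)) (g : Term n → MvPolynomial (Fin (n + 1)) K) : Prop :=
  ∀ σ ∈ border O, ∀ τ ∈ (monomial σ (1 : K) - g σ).support, τ ∈ O ∧ tdeg τ = tdeg σ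

/-- The set of border reductors `𝒯G = {η·g_σ : σ ∈ ∂𝒪, η ∈ 𝒯_σ}`. -/
def reductors (O : Set (Term n)) (lab : Term n → ℕ)
    (g : Term n → MvPolynomial (Fin (n + 1)) K) : Set (MvPolynomial (Fin (n + 1)) K) :=
  {p | ∃ σ ∈ border O, ∃ η ∈ mulSet O lab σ, p = monomial η (1 : K) * g σ}

/-- The degree-`d` border reductors `𝒯G_d = 𝒯G ∩ P_d`. -/
def reductorsDeg (O : Set (Term n)) (lab : Term n → ℕ)
    (g : Term n → MvPolynomial (Fin (n + 1)) K) (d : ℕ) :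
    Set (MvPolynomial (Fin (n + 1)) K) :=
  reductors O lab g ∩ {p | p.IsHomogeneous d}

/-- One step of the border reduction relation `→_G`. -/
def Step (O : Set (Term n)) (lab : Term n → ℕ)
    (g : Term n → MvPolynomial (Fin (n + 1)) K)
    (f h : MvPolynomial (Fin (n + 1)) K) : Prop :=
  ∃ σ ∈ border O, ∃ η ∈ mulSet O lab σ, η + σ ∈ f.support ∧
    h = f - f.coeff (η + σ) • (monomial η (1 : K) * g σ)

/-- The border reduction relation `→⁺_G` (finitely many, possibly zero, steps). -/
def Reduces (O : Set (Term n)) (lab : Term n → ℕ)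
    (g : Term n → MvPolynomial (Fin (n + 1)) K) :
    MvPolynomial (Fin (n + 1)) K → MvPolynomial (Fin (n + 1)) K → Prop :=
  Relation.ReflTransGen (Step O lab g)

/-- The `K`-vector space spanned by a set of terms. -/
noncomputable def spanTerms (K : Type*) [Field K] (S : Set (Term n)) :
    Submodule K (MvPolynomial (Fin (n + 1)) K) :=
  Submodule.span K ((fun τ => monomial τ (1 : K)) '' S)

/-- The ideal `(G)` generated by a `∂𝒪`-prebasis. -/
noncomputable def idealG (O : Set (Term n)) (g : Term n → MvPolynomial (Fin (n + 1)) K) :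
    Ideal (MvPolynomial (Fin (n + 1)) K) :=
  Ideal.span (g '' border O)

/-- The degree-`d` part `I_d` of an ideal, as a `K`-vector subspace. -/
noncomputable def degPart (I : Ideal (MvPolynomial (Fin (n + 1)) K)) (d : ℕ) :
    Submodule K (MvPolynomial (Fin (n + 1)) K) :=
  Submodule.restrictScalars K I ⊓ homogeneousSubmodule (Fin (n + 1)) K d

/-- Homogeneous ideal. -/
def IsHomogeneousIdeal (I : Ideal (MvPolynomial (Fin (n + 1)) K)) : Prop :=
  ∀ f ∈ I, ∀ d : ℕ, homogeneousComponent d f ∈ I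

/-- `G` is a homogeneous `∂𝒪`-basis of `J`: it is a prebasis contained in `J` and for every
`d` one has `P_d = J_d ⊕ ⟨𝒪_d⟩`, i.e. the residue classes of `𝒪_d` are a basis of `P_d/J_d`. -/
def IsBorderBasisOf (O : Set (Term n)) (g : Term n → MvPolynomial (Fin (n + 1)) K)
    (J : Ideal (MvPolynomial (Fin (n + 1)) K)) : Prop :=
  IsPrebasis O g ∧ (∀ σ ∈ border O, g σ ∈ J) ∧
    ∀ d : ℕ, degPart J d ⊔ spanTerms K (Od O d) = homogeneousSubmodule (Fin (n + 1)) K d ∧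
      Disjoint (degPart J d) (spanTerms K (Od O d))

/-- An `m`-lower representation of `f` by `𝒯G`: `f = Σ c_j • η_j·g_{σ_j}` with distinct
pairs `(η_j, σ_j)`, `η_j ∈ 𝒯_{σ_j}` and `ind(η_j σ_j) ≤ m`. -/
def HasLRep (O : Set (Term n)) (lab : Term n → ℕ)
    (g : Term n → MvPolynomial (Fin (n + 1)) K)
    (f : MvPolynomial (Fin (n + 1)) K) (m : ℕ) : Prop :=
  ∃ (s : Finset (Term n × Term n)) (c : Term n × Term n → K),
    (∀ p ∈ s, p.2 ∈ border O ∧ p.1 ∈ mulSet O lab p.2 ∧ ind O (p.1 + p.2) ≤ m) ∧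
    f = ∑ p ∈ s, c p • (monomial p.1 (1 : K) * g p.2)

/-- An `m`-lower representation of `f` by `𝒯G_d`. -/
def HasLRepDeg (O : Set (Term n)) (lab : Term n → ℕ)
    (g : Term n → MvPolynomial (Fin (n + 1)) K)
    (f : MvPolynomial (Fin (n + 1)) K) (m d : ℕ) : Prop :=
  ∃ (s : Finset (Term n × Term n)) (c : Term n × Term n → K),
    (∀ p ∈ s, p.2 ∈ border O ∧ p.1 ∈ mulSet O lab p.2 ∧ ind O (p.1 + p.2) ≤ m ∧
      (monomial p.1 (1 : K) * g p.2).IsHomogeneous d) ∧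
    f = ∑ p ∈ s, c p • (monomial p.1 (1 : K) * g p.2)

/-- The subtype of terms of `𝒪` of degree `d`. -/
abbrev OdSub (O : Set (Term n)) (d : ℕ) : Type _ := {τ : Term n // τ ∈ Od O d}

lemma tdeg_component_lt {d : ℕ} (m : Term n) (h : tdeg m = d) (i : Fin (n + 1)) :
    m i < d + 1 := by
  have : m i ≤ tdeg m :=
    Finset.single_le_sum (f := fun j => m j) (fun j _ => Nat.zero_le _) (Finset.mem_univ i)
  omega

instance (O : Set (Term n)) (d : ℕ) : Finite (OdSub O d) := by
  have hinj : Function.Injective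
      (fun τ : OdSub O d => fun i : Fin (n + 1) =>
        (⟨τ.1 i, tdeg_component_lt τ.1 τ.2.2 i⟩ : Fin (d + 1))) := by
    intro a b hab
    apply Subtype.ext
    apply Finsupp.ext
    intro i
    simpa using congrArg Fin.val (congrFun hab i)
  exact Finite.of_injective _ hinj

noncomputable instance (O : Set (Term n)) (d : ℕ) : Fintype (OdSub O d) :=
  Fintype.ofFinite _

open scoped Classical in
/-- The `r`-th `d`-graded formal multiplication matrix of a prebasis `G`,
with rows indexed by `𝒪_{d+1}` and columns by `𝒪_d`. -/
noncomputable def multMatrix (O : Set (Term n))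
    (g : Term n → MvPolynomial (Fin (n + 1)) K) (r : Fin (n + 1)) (d : ℕ) :
    Matrix (OdSub O (d + 1)) (OdSub O d) K :=
  Matrix.of fun τ' τ =>
    if τ.1 + Finsupp.single r 1 ∈ O then
      (if τ.1 + Finsupp.single r 1 = τ'.1 then 1 else 0)
    else (monomial (τ.1 + Finsupp.single r 1) (1 : K)
            - g (τ.1 + Finsupp.single r 1)).coeff τ'.1

/-- The minimum degree of a border term. -/
noncomputable def minDegBorder (O : Set (Term n)) : ℕ := sInf (tdeg '' border O)

/-- The `d`-th Macaulay transformation `a^{⟨d⟩}`, computed greedily. -/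
noncomputable def macaulay : ℕ → ℕ → ℕ
  | 0, _ => 0
  | d + 1, a =>
    if a = 0 then 0
    else
      Nat.choose (sSup {k | Nat.choose k (d + 1) ≤ a} + 1) (d + 2) +
        macaulay d (a - Nat.choose (sSup {k | Nat.choose k (d + 1) ≤ a}) (d + 1))

/-- An ideal is generated in degrees `≤ m` if it is generated by its homogeneous
elements of degree `≤ m`. -/
def GeneratedInDegLE (I : Ideal (MvPolynomial (Fin (n + 1)) K)) (m : ℕ) : Prop :=
  I = Ideal.span {f | f ∈ I ∧ ∃ d ≤ m, f.IsHomogeneous d}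

-- basic tdeg lemmas
lemma tdeg_add (a b : Term n) : tdeg (a + b) = tdeg a + tdeg b := by
  simp [tdeg, Finsupp.add_apply, Finset.sum_add_distrib]
lemma tdeg_single (r : Fin (n+1)) : tdeg (Finsupp.single r 1) = 1 := by
  simp [tdeg, Finsupp.single_apply]
lemma tdeg_eq_zero {μ : Term n} : tdeg μ = 0 ↔ μ = 0 := by
  constructor
  · intro h; ext i
    have := Finset.sum_eq_zero_iff.1 h i (Finset.mem_univ i)
    simpa using this
  · rintro rfl; simp [tdeg]
lemma tdeg_degree (μ : Term n) : μ.degree = tdeg μ := by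
  rw [Finsupp.degree, tdeg]
  exact Finset.sum_subset (Finset.subset_univ _)
    (by simp +contextual [Finsupp.notMem_support_iff])
lemma sub_single_add {μ : Term n} {r : Fin (n+1)} (h : μ r ≠ 0) :
    (μ - Finsupp.single r 1) + Finsupp.single r 1 = μ :=
  tsub_add_cancel_of_le (Finsupp.single_le_iff.mpr (by omega))
lemma tdeg_sub_single {μ : Term n} {r : Fin (n+1)} (h : μ r ≠ 0) :
    tdeg (μ - Finsupp.single r 1) + 1 = tdeg μ := by
  conv_rhs => rw [← sub_single_add h]
  rw [tdeg_add, tdeg_single]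

lemma tdeg_induction {Q : Term n → Prop}
    (h : ∀ μ, (∀ ν : Term n, tdeg ν < tdeg μ → Q ν) → Q μ) : ∀ μ, Q μ := by
  suffices H : ∀ d, ∀ μ : Term n, tdeg μ ≤ d → Q μ from fun μ => H (tdeg μ) μ le_rfl
  intro d
  induction d with
  | zero => exact fun μ hμ => h μ (fun ν hν => absurd hν (by omega))
  | succ d IH => exact fun μ hμ => h μ (fun ν hν => IH ν (by omega))

variable {O : Set (Term n)}
lemma zero_mem_O (hO : IsOrderIdeal O) : (0 : Term n) ∈ O := by
  obtain ⟨τ, hτ⟩ := hO.1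
  exact hO.2 τ hτ 0 (by simp [Finsupp.le_def])
lemma minDeg_le_of_not_mem (hO : IsOrderIdeal O) :
    ∀ μ : Term n, μ ∉ O → minDegBorder O ≤ tdeg μ := by
  refine tdeg_induction fun μ IH hμ => ?_
  have hne : μ ≠ 0 := fun h => hμ (h ▸ zero_mem_O hO)
  obtain ⟨r, hr⟩ : ∃ r, μ r ≠ 0 := by
    by_contra h; push_neg at h; exact hne (Finsupp.ext fun i => h i)
  have h2 : tdeg (μ - Finsupp.single r 1) + 1 = tdeg μ := tdeg_sub_single hr
  by_cases h' : μ - Finsupp.single r 1 ∈ O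
  · have hb : μ ∈ border O := ⟨hμ, r, _, h', (sub_single_add hr).symm⟩
    exact Nat.sInf_le ⟨μ, hb, rfl⟩
  · exact le_trans (IH _ (by omega) h') (by omega)
lemma mem_O_of_tdeg_lt (hO : IsOrderIdeal O) {μ : Term n}
    (h : tdeg μ < minDegBorder O) : μ ∈ O := by
  by_contra hc; exact absurd (minDeg_le_of_not_mem hO μ hc) (by omega)

section Ops
variable (O : Set (Term n)) (g : Term n → MvPolynomial (Fin (n + 1)) K)

open scoped Classical in
/-- reduction of a single term: itself if in `O`, else `σ - g σ`. -/
noncomputable def red (τ : Term n) : MvPolynomial (Fin (n + 1)) K :=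
  if τ ∈ O then monomial τ 1 else monomial τ 1 - g τ

variable {O g}

lemma red_support (hg : IsPrebasis O g) (hO : IsOrderIdeal O) {τ : Term n}
    (hτ : ∃ μ ∈ O, ∃ r, τ = μ + Finsupp.single r 1) :
    ∀ m ∈ (red O g τ).support, m ∈ O ∧ tdeg m = tdeg τ := by
  intro m hm
  by_cases h : τ ∈ O
  · rw [red, if_pos h] at hm
    have := MvPolynomial.support_monomial_subset hm
    simp only [Finset.mem_singleton] at this
    subst this; exact ⟨h, rfl⟩
  · rw [red, if_neg h] at hm
    obtain ⟨μ, hμ, r, rfl⟩ := hτ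
    exact hg _ ⟨h, r, μ, hμ, rfl⟩ m hm
end Ops

section Xop
variable (O : Set (Term n)) (g : Term n → MvPolynomial (Fin (n + 1)) K)

/-- multiply by `x_r` and reduce the resulting terms once. -/
noncomputable def Xop (r : Fin (n + 1)) (p : MvPolynomial (Fin (n + 1)) K) :
    MvPolynomial (Fin (n + 1)) K :=
  (AddMonoidAlgebra.coeff p).sum fun τ c => c • red O g (τ + Finsupp.single r 1)

variable {O g}

lemma Xop_monomial (r : Fin (n + 1)) (τ : Term n) (c : K) :
    Xop O g r (monomial τ c) = c • red O g (τ + Finsupp.single r 1) := by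
  rw [Xop, ← single_eq_monomial, AddMonoidAlgebra.sum_single_index (by simp)]

lemma Xop_add (r : Fin (n + 1)) (p q : MvPolynomial (Fin (n + 1)) K) :
    Xop O g r (p + q) = Xop O g r p + Xop O g r q :=
  Finsupp.sum_add_index (by simp) (by intros; rw [add_smul])

lemma Xop_smul (r : Fin (n + 1)) (a : K) (p : MvPolynomial (Fin (n + 1)) K) :
    Xop O g r (a • p) = a • Xop O g r p := by
  rw [Xop, AddMonoidAlgebra.coeff_smul, Finsupp.sum_smul_index (by simp), Xop, Finsupp.smul_sum]
  exact Finsupp.sum_congr fun τ _ => by rw [mul_smul]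

variable (O g) in
noncomputable def XopL (r : Fin (n + 1)) :
    MvPolynomial (Fin (n + 1)) K →ₗ[K] MvPolynomial (Fin (n + 1)) K where
  toFun := Xop O g r
  map_add' := Xop_add r
  map_smul' := Xop_smul r

@[simp] lemma XopL_apply (r : Fin (n + 1)) (p) : XopL O g r p = Xop O g r p := rfl

/-- `Xop` in terms of an explicit finite sum. -/
lemma Xop_eq_sum (r : Fin (n + 1)) (p : MvPolynomial (Fin (n + 1)) K) :
    Xop O g r p = ∑ τ ∈ p.support, (p.coeff τ) • red O g (τ + Finsupp.single r 1) := rfl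

end Xop


section NF
variable (O : Set (Term n)) (g : Term n → MvPolynomial (Fin (n + 1)) K)

/-- normal form of a term, computed by multiplying up variable by variable and reducing. -/
noncomputable def NF (μ : Term n) : MvPolynomial (Fin (n + 1)) K :=
  if h : μ = 0 then monomial 0 1
  else
    Xop O g (μ.support.min' (Finsupp.support_nonempty_iff.2 h))
      (NF (μ - Finsupp.single (μ.support.min' (Finsupp.support_nonempty_iff.2 h)) 1))
termination_by tdeg μ
decreasing_by
  have hr : μ (μ.support.min' (Finsupp.support_nonempty_iff.2 h)) ≠ 0 :=
    Finsupp.mem_support_iff.1 (μ.support.min'_mem _)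
  have := tdeg_sub_single hr
  omega

variable {O g}

lemma NF_zero : NF O g 0 = monomial 0 1 := by rw [NF]; simp

lemma NF_pos {μ : Term n} (h : μ ≠ 0) :
    NF O g μ = Xop O g (μ.support.min' (Finsupp.support_nonempty_iff.2 h))
      (NF O g (μ - Finsupp.single (μ.support.min' (Finsupp.support_nonempty_iff.2 h)) 1)) := by
  conv_lhs => rw [NF]
  simp [h]

/-- Support of `Xop r p` is controlled provided `p` is supported in `O`-terms of one degree. -/
lemma Xop_supp (hO : IsOrderIdeal O) (hg : IsPrebasis O g) {d : ℕ} (r : Fin (n + 1))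
    {p : MvPolynomial (Fin (n + 1)) K} (hp : ∀ m ∈ p.support, m ∈ Od O d) :
    ∀ m ∈ (Xop O g r p).support, m ∈ Od O (d + 1) := by
  intro m hm
  rw [Xop_eq_sum] at hm
  have := MvPolynomial.mem_support_iff.1 hm
  rw [MvPolynomial.coeff_sum] at this
  obtain ⟨τ, hτ, hne⟩ : ∃ τ ∈ p.support, coeff m ((p.coeff τ) • red O g (τ + Finsupp.single r 1)) ≠ 0 := by
    by_contra hc; push_neg at hc; exact this (Finset.sum_eq_zero hc)
  have hmm : m ∈ (red O g (τ + Finsupp.single r 1)).support := by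
    rw [MvPolynomial.coeff_smul] at hne
    exact MvPolynomial.mem_support_iff.2 fun h0 => hne (by rw [h0, smul_zero])
  obtain ⟨hτO, hτd⟩ := hp τ hτ
  have := red_support hg hO ⟨τ, hτO, r, rfl⟩ m hmm
  exact ⟨this.1, by rw [this.2, tdeg_add, tdeg_single, hτd]⟩

lemma NF_supp (hO : IsOrderIdeal O) (hg : IsPrebasis O g) :
    ∀ μ : Term n, ∀ m ∈ (NF O g μ).support, m ∈ Od O (tdeg μ) := by
  refine tdeg_induction fun μ IH => ?_
  by_cases h : μ = 0
  · subst h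
    intro m hm
    rw [NF_zero] at hm
    have := MvPolynomial.support_monomial_subset hm
    simp only [Finset.mem_singleton] at this
    subst this
    exact ⟨zero_mem_O hO, rfl⟩
  · rw [NF_pos h]
    set r := μ.support.min' (Finsupp.support_nonempty_iff.2 h) with hrdef
    have hr : μ r ≠ 0 := Finsupp.mem_support_iff.1 (μ.support.min'_mem _)
    have hdeg := tdeg_sub_single hr
    have := Xop_supp hO hg (d := tdeg (μ - Finsupp.single r 1)) r
      (IH _ (by omega))
    rw [show tdeg (μ - Finsupp.single r 1) + 1 = tdeg μ from hdeg] at this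
    exact this

lemma NF_O (hO : IsOrderIdeal O) :
    ∀ μ : Term n, μ ∈ O → NF O g μ = monomial μ 1 := by
  refine tdeg_induction fun μ IH hμ => ?_
  by_cases h : μ = 0
  · subst h; exact NF_zero
  · rw [NF_pos h]
    set r := μ.support.min' (Finsupp.support_nonempty_iff.2 h) with hrdef
    have hr : μ r ≠ 0 := Finsupp.mem_support_iff.1 (μ.support.min'_mem _)
    have hdeg := tdeg_sub_single hr
    have hμ' : μ - Finsupp.single r 1 ∈ O :=
      hO.2 μ hμ _ (by rw [Finsupp.le_def]; intro i; simp [Finsupp.tsub_apply])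
    rw [IH _ (by omega) hμ', Xop_monomial, one_smul,
      red, if_pos (by rw [sub_single_add hr]; exact hμ), sub_single_add hr]

end NF


section NFP
variable (O : Set (Term n)) (g : Term n → MvPolynomial (Fin (n + 1)) K)

/-- linear extension of the normal form to polynomials. -/
noncomputable def NFP (p : MvPolynomial (Fin (n + 1)) K) : MvPolynomial (Fin (n + 1)) K :=
  (AddMonoidAlgebra.coeff p).sum fun τ c => c • NF O g τ

variable {O g}

lemma NFP_monomial (τ : Term n) (c : K) : NFP O g (monomial τ c) = c • NF O g τ := by
  rw [NFP, ← single_eq_monomial, AddMonoidAlgebra.sum_single_index (by simp)]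

lemma NFP_add (p q : MvPolynomial (Fin (n + 1)) K) :
    NFP O g (p + q) = NFP O g p + NFP O g q :=
  Finsupp.sum_add_index (by simp) (by intros; rw [add_smul])

lemma NFP_smul (a : K) (p : MvPolynomial (Fin (n + 1)) K) :
    NFP O g (a • p) = a • NFP O g p := by
  rw [NFP, AddMonoidAlgebra.coeff_smul, Finsupp.sum_smul_index (by simp), NFP, Finsupp.smul_sum]
  exact Finsupp.sum_congr fun τ _ => by rw [mul_smul]

variable (O g) in
noncomputable def NFPL :
    MvPolynomial (Fin (n + 1)) K →ₗ[K] MvPolynomial (Fin (n + 1)) K where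
  toFun := NFP O g
  map_add' := NFP_add
  map_smul' := NFP_smul

@[simp] lemma NFPL_apply (p) : NFPL O g p = NFP O g p := rfl

lemma NFP_eq_sum (p : MvPolynomial (Fin (n + 1)) K) :
    NFP O g p = ∑ τ ∈ p.support, (p.coeff τ) • NF O g τ := rfl

/-- `NFP` fixes polynomials supported in `O`. -/
lemma NFP_fix (hO : IsOrderIdeal O) {p : MvPolynomial (Fin (n + 1)) K}
    (hp : ∀ m ∈ p.support, m ∈ O) : NFP O g p = p := by
  rw [NFP_eq_sum]
  conv_rhs => rw [← MvPolynomial.support_sum_monomial_coeff p]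
  exact Finset.sum_congr rfl fun τ hτ => by
    rw [NF_O hO τ (hp τ hτ), MvPolynomial.smul_monomial, smul_eq_mul, mul_one]

lemma smul_mem_ideal (I : Ideal (MvPolynomial (Fin (n + 1)) K)) (c : K)
    {x : MvPolynomial (Fin (n + 1)) K} (hx : x ∈ I) : c • x ∈ I := by
  rw [MvPolynomial.smul_eq_C_mul]; exact I.mul_mem_left _ hx

/-- one-step reduction stays in the ideal. -/
lemma mul_sub_Xop_mem (hO : IsOrderIdeal O) {p : MvPolynomial (Fin (n + 1)) K}
    (hp : ∀ m ∈ p.support, m ∈ O) (r : Fin (n + 1)) :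
    monomial (Finsupp.single r 1) (1 : K) * p - Xop O g r p ∈ idealG O g := by
  have hrw : monomial (Finsupp.single r 1) (1 : K) * p - Xop O g r p =
      ∑ τ ∈ p.support, (p.coeff τ) •
        (monomial (τ + Finsupp.single r 1) (1 : K) - red O g (τ + Finsupp.single r 1)) := by
    have h1 : monomial (Finsupp.single r 1) (1 : K) * p =
        ∑ τ ∈ p.support, (p.coeff τ) • monomial (τ + Finsupp.single r 1) (1 : K) := by
      conv_lhs => rw [← MvPolynomial.support_sum_monomial_coeff p]
      rw [Finset.mul_sum]
      refine Finset.sum_congr rfl fun τ hτ => ?_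
      rw [monomial_mul, one_mul, MvPolynomial.smul_monomial, smul_eq_mul, mul_one,
        add_comm τ (Finsupp.single r 1)]
    rw [h1, Xop_eq_sum, ← Finset.sum_sub_distrib]
    exact Finset.sum_congr rfl fun τ _ => (smul_sub _ _ _).symm
  rw [hrw]
  refine Submodule.sum_mem _ fun τ hτ => smul_mem_ideal _ _ ?_
  by_cases h : τ + Finsupp.single r 1 ∈ O
  · rw [red, if_pos h, sub_self]; exact Submodule.zero_mem _
  · rw [red, if_neg h, sub_sub_cancel]
    exact Ideal.subset_span ⟨τ + Finsupp.single r 1, ⟨h, r, τ, hp τ hτ, rfl⟩, rfl⟩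

lemma monomial_sub_NF_mem (hO : IsOrderIdeal O) (hg : IsPrebasis O g) :
    ∀ μ : Term n, monomial μ (1 : K) - NF O g μ ∈ idealG O g := by
  refine tdeg_induction fun μ IH => ?_
  by_cases h : μ = 0
  · subst h; rw [NF_zero, sub_self]; exact Submodule.zero_mem _
  · rw [NF_pos h]
    set r := μ.support.min' (Finsupp.support_nonempty_iff.2 h) with hrdef
    have hr : μ r ≠ 0 := Finsupp.mem_support_iff.1 (μ.support.min'_mem _)
    have hdeg := tdeg_sub_single hr
    set μ' := μ - Finsupp.single r 1 with hμ'def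
    have key : monomial μ (1 : K) - Xop O g r (NF O g μ') =
        monomial (Finsupp.single r 1) (1 : K) * (monomial μ' (1 : K) - NF O g μ')
          + (monomial (Finsupp.single r 1) (1 : K) * NF O g μ' - Xop O g r (NF O g μ')) := by
      rw [mul_sub, monomial_mul, one_mul, add_comm (Finsupp.single r 1) μ', hμ'def,
        sub_single_add hr]
      ring
    rw [key]
    refine Submodule.add_mem _ (Ideal.mul_mem_left _ _ (IH μ' (by omega))) ?_
    exact mul_sub_Xop_mem hO (fun m hm => (NF_supp hO hg μ' m hm).1) r

lemma sub_NFP_mem (hO : IsOrderIdeal O) (hg : IsPrebasis O g)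
    (p : MvPolynomial (Fin (n + 1)) K) : p - NFP O g p ∈ idealG O g := by
  have : p - NFP O g p =
      ∑ τ ∈ p.support, (p.coeff τ) • (monomial τ (1 : K) - NF O g τ) := by
    have h1 : p = ∑ τ ∈ p.support, (p.coeff τ) • monomial τ (1 : K) := by
      conv_lhs => rw [← MvPolynomial.support_sum_monomial_coeff p]
      exact Finset.sum_congr rfl fun τ hτ => by
        rw [MvPolynomial.smul_monomial, smul_eq_mul, mul_one]
    conv_lhs => rw [NFP_eq_sum]
    nth_rw 1 [h1]
    rw [← Finset.sum_sub_distrib]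
    exact Finset.sum_congr rfl fun τ _ => (smul_sub _ _ _).symm
  rw [this]
  exact Submodule.sum_mem _ fun τ _ =>
    smul_mem_ideal _ _ (monomial_sub_NF_mem hO hg τ)

end NFP

section Bridge
variable {O : Set (Term n)} {g : Term n → MvPolynomial (Fin (n + 1)) K}

/-- expansion of a polynomial supported in `Od O e` over the finite index type. -/
lemma eq_sum_OdSub {e : ℕ} {p : MvPolynomial (Fin (n + 1)) K}
    (hp : ∀ m ∈ p.support, m ∈ Od O e) :
    p = ∑ τ' : OdSub O e, (p.coeff τ'.1) • monomial τ'.1 (1 : K) := by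
  apply MvPolynomial.ext
  intro m
  rw [MvPolynomial.coeff_sum]
  by_cases hm : m ∈ Od O e
  · rw [Fintype.sum_eq_single (⟨m, hm⟩ : OdSub O e) (fun τ' hτ' => ?_)]
    · rw [MvPolynomial.coeff_smul, MvPolynomial.coeff_monomial, if_pos rfl, smul_eq_mul, mul_one]
    · rw [MvPolynomial.coeff_smul, MvPolynomial.coeff_monomial,
        if_neg (fun h => hτ' (Subtype.ext h)), smul_zero]
  · trans (0 : K)
    · exact MvPolynomial.notMem_support_iff.1 fun hc => hm (hp m hc)
    · exact (Finset.sum_eq_zero fun τ' _ => by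
        rw [MvPolynomial.coeff_smul, MvPolynomial.coeff_monomial,
          if_neg (fun h => hm (by rw [← h]; exact τ'.2)), smul_zero]).symm

/-- coefficient extraction from such an expansion. -/
lemma coeff_sum_OdSub {e : ℕ} (c : OdSub O e → K) (τ'' : OdSub O e) :
    (∑ τ' : OdSub O e, c τ' • monomial τ'.1 (1 : K)).coeff τ''.1 = c τ'' := by
  rw [MvPolynomial.coeff_sum, Fintype.sum_eq_single τ'' (fun τ' hτ' => ?_)]
  · rw [MvPolynomial.coeff_smul, MvPolynomial.coeff_monomial, if_pos rfl, smul_eq_mul, mul_one]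
  · rw [MvPolynomial.coeff_smul, MvPolynomial.coeff_monomial,
      if_neg (fun h => hτ' (Subtype.ext h)), smul_zero]

lemma Xop_mono_eq_sum (hO : IsOrderIdeal O) (hg : IsPrebasis O g)
    (r : Fin (n + 1)) {d : ℕ} (τ : OdSub O d) :
    Xop O g r (monomial τ.1 (1 : K)) =
      ∑ τ' : OdSub O (d + 1), multMatrix O g r d τ' τ • monomial τ'.1 (1 : K) := by
  rw [Xop_monomial, one_smul]
  have hsupp : ∀ m ∈ (red O g (τ.1 + Finsupp.single r 1)).support, m ∈ Od O (d + 1) := by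
    intro m hm
    have := red_support hg hO ⟨τ.1, τ.2.1, r, rfl⟩ m hm
    exact ⟨this.1, by rw [this.2, tdeg_add, tdeg_single, τ.2.2]⟩
  rw [eq_sum_OdSub hsupp]
  refine Finset.sum_congr rfl fun τ' _ => ?_
  congr 1
  by_cases h : τ.1 + Finsupp.single r 1 ∈ O
  · rw [red, if_pos h, multMatrix, Matrix.of_apply, if_pos h, MvPolynomial.coeff_monomial]
  · rw [red, if_neg h, multMatrix, Matrix.of_apply, if_neg h]

/-- composition of two `Xop`s on an `O`-monomial, in terms of the matrix product. -/
lemma Xop_Xop_eq_sum (hO : IsOrderIdeal O) (hg : IsPrebasis O g)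
    (r s : Fin (n + 1)) {d : ℕ} (τ : OdSub O d) :
    Xop O g r (Xop O g s (monomial τ.1 (1 : K))) =
      ∑ τ'' : OdSub O (d + 1 + 1),
        (multMatrix O g r (d + 1) * multMatrix O g s d) τ'' τ • monomial τ''.1 (1 : K) := by
  rw [Xop_mono_eq_sum hO hg s τ]
  have h1 : Xop O g r (∑ τ' : OdSub O (d+1), multMatrix O g s d τ' τ • monomial τ'.1 (1:K)) =
      ∑ τ' : OdSub O (d+1), multMatrix O g s d τ' τ • Xop O g r (monomial τ'.1 (1:K)) := by
    rw [show Xop O g r = XopL O g r from rfl, map_sum]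
    exact Finset.sum_congr rfl fun τ' _ => by rw [map_smul]
  have h2 : (∑ τ' : OdSub O (d+1), multMatrix O g s d τ' τ • Xop O g r (monomial τ'.1 (1:K))) =
      ∑ τ' : OdSub O (d+1), ∑ τ'' : OdSub O (d+1+1),
        multMatrix O g s d τ' τ • (multMatrix O g r (d+1) τ'' τ' • monomial τ''.1 (1:K)) :=
    Finset.sum_congr rfl fun τ' _ => by rw [Xop_mono_eq_sum hO hg r τ', Finset.smul_sum]
  rw [h1, h2, Finset.sum_comm]
  refine Finset.sum_congr rfl fun τ'' _ => ?_
  rw [Matrix.mul_apply, Finset.sum_smul]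
  exact Finset.sum_congr rfl fun τ' _ => by rw [smul_smul, mul_comm]

/-- matrix commutation at degree `d` is equivalent to operator commutation on `O_d`-monomials. -/
lemma matrix_comm_iff (hO : IsOrderIdeal O) (hg : IsPrebasis O g)
    (r s : Fin (n + 1)) (d : ℕ) :
    multMatrix O g r (d + 1) * multMatrix O g s d =
        multMatrix O g s (d + 1) * multMatrix O g r d ↔
      ∀ τ : OdSub O d, Xop O g r (Xop O g s (monomial τ.1 (1 : K))) =
        Xop O g s (Xop O g r (monomial τ.1 (1 : K))) := by
  constructor
  · intro h τ
    rw [Xop_Xop_eq_sum hO hg r s τ, Xop_Xop_eq_sum hO hg s r τ, h]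
  · intro h
    ext τ'' τ
    have := congrArg (MvPolynomial.coeff τ''.1) (h τ)
    rwa [Xop_Xop_eq_sum hO hg r s τ, Xop_Xop_eq_sum hO hg s r τ,
      coeff_sum_OdSub, coeff_sum_OdSub] at this

end Bridge


section Step
variable {O : Set (Term n)} {g : Term n → MvPolynomial (Fin (n + 1)) K}

/-- operator commutation hypothesis on `O`-monomials. -/
def Hcomm (O : Set (Term n)) (g : Term n → MvPolynomial (Fin (n + 1)) K) : Prop :=
  ∀ τ : Term n, τ ∈ O → ∀ r s : Fin (n + 1),
    Xop O g r (Xop O g s (monomial τ (1 : K))) = Xop O g s (Xop O g r (monomial τ (1 : K)))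

lemma Xcomm (H : Hcomm O g) {p : MvPolynomial (Fin (n + 1)) K}
    (hp : ∀ m ∈ p.support, m ∈ O) (r s : Fin (n + 1)) :
    Xop O g r (Xop O g s p) = Xop O g s (Xop O g r p) := by
  have hXL : ∀ t : Fin (n+1), Xop O g t = XopL O g t := fun _ => rfl
  have hp' : p = ∑ τ ∈ p.support, (p.coeff τ) • monomial τ (1 : K) := by
    conv_lhs => rw [← MvPolynomial.support_sum_monomial_coeff p]
    exact Finset.sum_congr rfl fun τ _ => by
      rw [MvPolynomial.smul_monomial, smul_eq_mul, mul_one]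
  rw [hp', hXL r, hXL s, map_sum, map_sum, map_sum, map_sum]
  refine Finset.sum_congr rfl fun τ hτ => ?_
  rw [map_smul, map_smul, map_smul, map_smul]
  simp only [XopL_apply]
  rw [H τ (hp τ hτ) r s]

lemma single_ne_zero' (r : Fin (n + 1)) : (Finsupp.single r 1 : Term n) ≠ 0 :=
  fun h => one_ne_zero (Finsupp.single_eq_zero.1 h)

lemma NF_step (hO : IsOrderIdeal O) (hg : IsPrebasis O g) (H : Hcomm O g) :
    ∀ μ : Term n, ∀ r : Fin (n + 1),
      NF O g (μ + Finsupp.single r 1) = Xop O g r (NF O g μ) := by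
  refine tdeg_induction fun μ IH r => ?_
  by_cases h0 : μ = 0
  · subst h0
    rw [zero_add]
    have hne := single_ne_zero' (n := n) r
    rw [NF_pos hne]
    have hsupp : (Finsupp.single r 1 : Term n).support = {r} :=
      Finsupp.support_single_ne_zero r one_ne_zero
    have hmin : (Finsupp.single r 1 : Term n).support.min'
        (Finsupp.support_nonempty_iff.2 hne) = r := by
      simp [hsupp]
    rw [hmin, tsub_self]
  · have hν : μ + Finsupp.single r 1 ≠ 0 := by
      intro hc
      have := tdeg_eq_zero.2 hc
      rw [tdeg_add, tdeg_single] at this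
      omega
    rw [NF_pos hν]
    set s := (μ + Finsupp.single r 1).support.min' (Finsupp.support_nonempty_iff.2 hν) with hsdef
    have hs : (μ + Finsupp.single r 1 : Term n) s ≠ 0 :=
      Finsupp.mem_support_iff.1 (Finset.min'_mem _ _)
    by_cases hsr : s = r
    · rw [hsr, add_tsub_cancel_right]
    · have hμs : μ s ≠ 0 := by
        rw [Finsupp.add_apply, Finsupp.single_apply, if_neg (fun hc => hsr hc.symm)] at hs
        simpa using hs
      have hkey : μ + Finsupp.single r 1 - Finsupp.single s 1 =
          (μ - Finsupp.single s 1) + Finsupp.single r 1 := by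
        ext i
        simp only [Finsupp.tsub_apply, Finsupp.add_apply, Finsupp.single_apply]
        split_ifs with h1 h2
        · exact absurd (h1 ▸ h2 ▸ rfl : s = r) hsr
        · omega
        · omega
        · omega
      have hlt : tdeg (μ - Finsupp.single s 1) < tdeg μ := by
        have := tdeg_sub_single hμs; omega
      rw [hkey, IH _ hlt r,
        Xcomm H (fun m hm => (NF_supp hO hg _ m hm).1) s r,
        ← IH _ hlt s, sub_single_add hμs]

end Step


section Ideal
variable {O : Set (Term n)} {g : Term n → MvPolynomial (Fin (n + 1)) K}

lemma NFP_xmul (hO : IsOrderIdeal O) (hg : IsPrebasis O g) (H : Hcomm O g)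
    (r : Fin (n + 1)) (p : MvPolynomial (Fin (n + 1)) K) :
    NFP O g (monomial (Finsupp.single r 1) 1 * p) = Xop O g r (NFP O g p) := by
  have h1 : monomial (Finsupp.single r 1) (1 : K) * p =
      ∑ τ ∈ p.support, (p.coeff τ) • monomial (τ + Finsupp.single r 1) (1 : K) := by
    conv_lhs => rw [← MvPolynomial.support_sum_monomial_coeff p]
    rw [Finset.mul_sum]
    refine Finset.sum_congr rfl fun τ hτ => ?_
    rw [monomial_mul, one_mul, MvPolynomial.smul_monomial, smul_eq_mul, mul_one,
      add_comm τ (Finsupp.single r 1)]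
  rw [h1, show NFP O g = NFPL O g from rfl, show Xop O g r = XopL O g r from rfl, map_sum,
    show (NFPL O g) p = ∑ τ ∈ p.support, (p.coeff τ) • NF O g τ from NFP_eq_sum p, map_sum]
  refine Finset.sum_congr rfl fun τ hτ => ?_
  rw [map_smul, map_smul]
  congr 1
  simp only [NFPL_apply, XopL_apply]
  rw [NFP_monomial, one_smul, NF_step hO hg H τ r]

lemma NFP_mono_mul (hO : IsOrderIdeal O) (hg : IsPrebasis O g) (H : Hcomm O g)
    {p : MvPolynomial (Fin (n + 1)) K} (hp : NFP O g p = 0) :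
    ∀ (η : Term n) (c : K), NFP O g (monomial η c * p) = 0 := by
  refine tdeg_induction fun η IH c => ?_
  by_cases h : η = 0
  · subst h
    rw [show (monomial (0 : Term n) c : MvPolynomial (Fin (n+1)) K) = MvPolynomial.C c from rfl,
      ← MvPolynomial.smul_eq_C_mul, NFP_smul, hp, smul_zero]
  · obtain ⟨r, hr⟩ : ∃ r, η r ≠ 0 := by
      by_contra hc; push_neg at hc; exact h (Finsupp.ext fun i => hc i)
    have hsplit : monomial (Finsupp.single r 1) (1 : K) *
        monomial (η - Finsupp.single r 1) c = monomial η c := by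
      rw [monomial_mul, one_mul]
      exact congrArg (fun t => monomial t c) ((add_comm _ _).trans (sub_single_add hr))
    have hlt : tdeg (η - Finsupp.single r 1) < tdeg η := by
      have := tdeg_sub_single hr; omega
    rw [← hsplit, mul_assoc, NFP_xmul hO hg H, IH _ hlt c]
    rw [show Xop O g r = XopL O g r from rfl, map_zero]

lemma NFP_g_zero (hO : IsOrderIdeal O) (hg : IsPrebasis O g) (H : Hcomm O g)
    {σ : Term n} (hσ : σ ∈ border O) : NFP O g (g σ) = 0 := by
  obtain ⟨hσO, r, τ, hτ, rfl⟩ := hσ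
  have h1 : g (τ + Finsupp.single r 1) = monomial (τ + Finsupp.single r 1) 1 -
      (monomial (τ + Finsupp.single r 1) 1 - g (τ + Finsupp.single r 1)) := by ring
  have h2 : NFP O g (monomial (τ + Finsupp.single r 1) (1 : K)) =
      monomial (τ + Finsupp.single r 1) 1 - g (τ + Finsupp.single r 1) := by
    rw [NFP_monomial, one_smul, NF_step hO hg H, NF_O hO τ hτ, Xop_monomial, one_smul,
      red, if_neg hσO]
  have h3 : NFP O g (monomial (τ + Finsupp.single r 1) 1 - g (τ + Finsupp.single r 1)) =
      monomial (τ + Finsupp.single r 1) 1 - g (τ + Finsupp.single r 1) :=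
    NFP_fix hO fun m hm => (hg _ ⟨hσO, r, τ, hτ, rfl⟩ m hm).1
  calc NFP O g (g (τ + Finsupp.single r 1))
      = NFP O g (monomial (τ + Finsupp.single r 1) 1) -
        NFP O g (monomial (τ + Finsupp.single r 1) 1 - g (τ + Finsupp.single r 1)) := by
        rw [show NFP O g = NFPL O g from rfl, ← map_sub, sub_sub_cancel]
    _ = 0 := by rw [h2, h3, sub_self]

lemma NFP_ideal_zero (hO : IsOrderIdeal O) (hg : IsPrebasis O g) (H : Hcomm O g)
    {f : MvPolynomial (Fin (n + 1)) K} (hf : f ∈ idealG O g) : NFP O g f = 0 := by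
  refine Submodule.span_induction ?_ ?_ ?_ ?_ hf
  · rintro x ⟨σ, hσ, rfl⟩
    exact NFP_g_zero hO hg H hσ
  · exact (map_zero (NFPL O g) : _)
  · intro x y _ _ hx hy
    rw [show NFP O g = NFPL O g from rfl] at *
    rw [map_add, hx, hy, add_zero]
  · intro q x _ hx
    have h1 : q • x = q * x := rfl
    rw [h1, show q * x = ∑ η ∈ q.support, monomial η (q.coeff η) * x by
      conv_lhs => rw [← MvPolynomial.support_sum_monomial_coeff q]
      rw [Finset.sum_mul]]
    rw [show NFP O g = NFPL O g from rfl, map_sum]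
    exact Finset.sum_eq_zero fun η _ => NFP_mono_mul hO hg H hx η _

end Ideal


section Span
variable {O : Set (Term n)} {g : Term n → MvPolynomial (Fin (n + 1)) K}

lemma mem_spanTerms_of_supp {S : Set (Term n)} {p : MvPolynomial (Fin (n + 1)) K}
    (hp : ∀ m ∈ p.support, m ∈ S) : p ∈ spanTerms K S := by
  rw [← MvPolynomial.support_sum_monomial_coeff p]
  refine Submodule.sum_mem _ fun τ hτ => ?_
  rw [show (monomial τ) (coeff τ p) = (coeff τ p) • monomial τ (1 : K) by
    rw [MvPolynomial.smul_monomial, smul_eq_mul, mul_one]]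
  exact Submodule.smul_mem _ _ (Submodule.subset_span ⟨τ, hp τ hτ, rfl⟩)

lemma spanTerms_le_homog (d : ℕ) :
    spanTerms K (Od O d) ≤ homogeneousSubmodule (Fin (n + 1)) K d := by
  rw [spanTerms, Submodule.span_le]
  rintro _ ⟨τ, hτ, rfl⟩
  exact (mem_homogeneousSubmodule _ _).2
    (isHomogeneous_monomial _ ((tdeg_degree τ).trans hτ.2))

lemma supp_tdeg_of_homog {d : ℕ} {f : MvPolynomial (Fin (n + 1)) K}
    (hf : f ∈ homogeneousSubmodule (Fin (n + 1)) K d) :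
    ∀ m ∈ f.support, tdeg m = d := by
  intro m hm
  by_contra hc
  exact MvPolynomial.mem_support_iff.1 hm
    (((mem_homogeneousSubmodule _ _).1 hf).coeff_eq_zero (by rwa [tdeg_degree]))

lemma NFP_mem_span (hO : IsOrderIdeal O) (hg : IsPrebasis O g) {d : ℕ}
    {f : MvPolynomial (Fin (n + 1)) K} (hf : f ∈ homogeneousSubmodule (Fin (n + 1)) K d) :
    NFP O g f ∈ spanTerms K (Od O d) := by
  rw [NFP_eq_sum]
  refine Submodule.sum_mem _ fun τ hτ => Submodule.smul_mem _ _ ?_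
  have := supp_tdeg_of_homog hf τ hτ
  exact mem_spanTerms_of_supp (fun m hm => this ▸ NF_supp hO hg τ m hm)

lemma NFP_fix_span (hO : IsOrderIdeal O) {S : Set (Term n)} (hS : S ⊆ O)
    {q : MvPolynomial (Fin (n + 1)) K} (hq : q ∈ spanTerms K S) : NFP O g q = q := by
  refine Submodule.span_induction ?_ ?_ ?_ ?_ hq
  · rintro _ ⟨τ, hτ, rfl⟩
    rw [NFP_monomial, one_smul, NF_O hO τ (hS hτ)]
  · exact (map_zero (NFPL O g) : _)
  · intro x y _ _ hx hy
    rw [show NFP O g = NFPL O g from rfl] at *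
    rw [map_add, hx, hy]
  · intro c x _ hx
    rw [NFP_smul, hx]

/-- commuting operators give the direct sum decomposition in each degree. -/
lemma basis_of_Hcomm (hO : IsOrderIdeal O) (hg : IsPrebasis O g) (H : Hcomm O g) (d : ℕ) :
    degPart (idealG O g) d ⊔ spanTerms K (Od O d) =
        homogeneousSubmodule (Fin (n + 1)) K d ∧
      Disjoint (degPart (idealG O g) d) (spanTerms K (Od O d)) := by
  constructor
  · refine le_antisymm (sup_le inf_le_right (spanTerms_le_homog d)) fun f hf => ?_
    refine Submodule.mem_sup.2 ⟨f - NFP O g f, ?_, NFP O g f, NFP_mem_span hO hg hf, by ring⟩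
    refine Submodule.mem_inf.2 ⟨sub_NFP_mem hO hg f, ?_⟩
    exact Submodule.sub_mem _ hf (spanTerms_le_homog d (NFP_mem_span hO hg hf))
  · rw [Submodule.disjoint_def]
    intro x hx1 hx2
    have h1 : NFP O g x = 0 :=
      NFP_ideal_zero hO hg H (Submodule.mem_inf.1 hx1).1
    have h2 : NFP O g x = x := NFP_fix_span hO (fun τ hτ => hτ.1) hx2
    rw [← h2, h1]

/-- the direct sum decomposition forces the operators to commute. -/
lemma Hcomm_of_basis (hO : IsOrderIdeal O) (hg : IsPrebasis O g)
    (hB : ∀ d : ℕ, degPart (idealG O g) d ⊔ spanTerms K (Od O d) =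
        homogeneousSubmodule (Fin (n + 1)) K d ∧
      Disjoint (degPart (idealG O g) d) (spanTerms K (Od O d))) :
    Hcomm O g := by
  intro τ hτ r s
  set d := tdeg τ with hd
  set m : MvPolynomial (Fin (n + 1)) K := monomial τ 1 with hm
  have hmsupp : ∀ m' ∈ m.support, m' ∈ Od O d := by
    intro m' hm'
    have := MvPolynomial.support_monomial_subset hm'
    simp only [Finset.mem_singleton] at this
    subst this; exact ⟨hτ, rfl⟩
  have hu : ∀ t : Fin (n + 1), ∀ m' ∈ (Xop O g t m).support, m' ∈ Od O (d + 1) :=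
    fun t => Xop_supp hO hg t hmsupp
  have hA : ∀ t t' : Fin (n + 1), ∀ m' ∈ (Xop O g t (Xop O g t' m)).support,
      m' ∈ Od O (d + 1 + 1) := fun t t' => Xop_supp hO hg t (hu t')
  -- both double products are congruent to x_t x_t' m mod the ideal
  have key : ∀ t t' : Fin (n + 1),
      monomial (Finsupp.single t 1) (1 : K) * (monomial (Finsupp.single t' 1) 1 * m)
        - Xop O g t (Xop O g t' m) ∈ idealG O g := by
    intro t t'
    have h1 : monomial (Finsupp.single t' 1) (1 : K) * m - Xop O g t' m ∈ idealG O g :=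
      mul_sub_Xop_mem hO (fun m' hm' => (hmsupp m' hm').1) t'
    have h2 : monomial (Finsupp.single t 1) (1 : K) * Xop O g t' m
        - Xop O g t (Xop O g t' m) ∈ idealG O g :=
      mul_sub_Xop_mem hO (fun m' hm' => (hu t' m' hm').1) t
    have := Submodule.add_mem _ (Ideal.mul_mem_left _
      (monomial (Finsupp.single t 1) (1 : K)) h1) h2
    convert this using 1
    ring
  have hdiff : Xop O g r (Xop O g s m) - Xop O g s (Xop O g r m) ∈ idealG O g := by
    have h1 := key r s
    have h2 := key s r
    have heq : monomial (Finsupp.single r 1) (1 : K) * (monomial (Finsupp.single s 1) 1 * m) =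
        monomial (Finsupp.single s 1) (1 : K) * (monomial (Finsupp.single r 1) 1 * m) := by ring
    rw [heq] at h1
    have := Submodule.sub_mem _ h2 h1
    convert this using 1
    ring
  have hAspan : Xop O g r (Xop O g s m) ∈ spanTerms K (Od O (d + 1 + 1)) :=
    mem_spanTerms_of_supp (hA r s)
  have hBspan : Xop O g s (Xop O g r m) ∈ spanTerms K (Od O (d + 1 + 1)) :=
    mem_spanTerms_of_supp (hA s r)
  have hdspan : Xop O g r (Xop O g s m) - Xop O g s (Xop O g r m) ∈
      spanTerms K (Od O (d + 1 + 1)) := Submodule.sub_mem _ hAspan hBspan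
  have hdeg : Xop O g r (Xop O g s m) - Xop O g s (Xop O g r m) ∈
      degPart (idealG O g) (d + 1 + 1) :=
    Submodule.mem_inf.2 ⟨hdiff, spanTerms_le_homog _ hdspan⟩
  have := (hB (d + 1 + 1)).2
  rw [Submodule.disjoint_def] at this
  have h0 := this _ hdeg hdspan
  exact sub_eq_zero.1 h0

end Span


section Final
variable {O : Set (Term n)} {g : Term n → MvPolynomial (Fin (n + 1)) K}

/-- in low degrees the operators commute automatically. -/
lemma low_comm (hO : IsOrderIdeal O) {τ : Term n} (hτ : τ ∈ O)
    (hlow : tdeg τ + 1 < minDegBorder O) (r s : Fin (n + 1)) :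
    Xop O g r (Xop O g s (monomial τ (1 : K))) =
      Xop O g s (Xop O g r (monomial τ (1 : K))) := by
  have h1 : ∀ t : Fin (n + 1), τ + Finsupp.single t 1 ∈ O := fun t =>
    mem_O_of_tdeg_lt hO (by rw [tdeg_add, tdeg_single]; omega)
  have h2 : ∀ t : Fin (n + 1), Xop O g t (monomial τ (1 : K)) =
      monomial (τ + Finsupp.single t 1) 1 := fun t => by
    rw [Xop_monomial, one_smul, red, if_pos (h1 t)]
  rw [h2 r, h2 s, Xop_monomial, Xop_monomial, one_smul, one_smul,
    add_right_comm τ (Finsupp.single s 1) (Finsupp.single r 1)]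

lemma main_iff (hO : IsOrderIdeal O) (hg : IsPrebasis O g) :
    (∀ d : ℕ, degPart (idealG O g) d ⊔ spanTerms K (Od O d) =
        homogeneousSubmodule (Fin (n + 1)) K d ∧
      Disjoint (degPart (idealG O g) d) (spanTerms K (Od O d))) ↔
      ∀ d : ℕ, minDegBorder O - 1 ≤ d → ∀ r s : Fin (n + 1), r < s →
        multMatrix O g r (d + 1) * multMatrix O g s d =
          multMatrix O g s (d + 1) * multMatrix O g r d := by
  constructor
  · intro hB d _ r s _
    have H := Hcomm_of_basis hO hg hB
    exact (matrix_comm_iff hO hg r s d).2 fun τ => H τ.1 τ.2.1 r s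
  · intro hyp
    have H : Hcomm O g := by
      intro τ hτ r s
      have main : ∀ r' s' : Fin (n + 1), r' < s' →
          Xop O g r' (Xop O g s' (monomial τ (1 : K))) =
            Xop O g s' (Xop O g r' (monomial τ (1 : K))) := by
        intro r' s' hrs
        by_cases hd : minDegBorder O - 1 ≤ tdeg τ
        · exact (matrix_comm_iff hO hg r' s' (tdeg τ)).1
            (hyp _ hd r' s' hrs) ⟨τ, hτ, rfl⟩
        · exact low_comm hO hτ (by omega) r' s'
      rcases lt_trichotomy r s with h | h | h
      · exact main r s h
      · rw [h]
      · exact (main s r h).symm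
    exact fun d => basis_of_Hcomm hO hg H d

end Final

/-- **Refined characterization by formal multiplication matrices.** `G` is a homogeneous
`∂𝒪`-basis iff `Χ_r^{(d+1)}Χ_s^{(d)} = Χ_s^{(d+1)}Χ_r^{(d)}` for every
`d ≥ mindeg(∂𝒪) - 1` and all `0 ≤ r < s ≤ n`. -/
theorem char_by_matrices_from_mindeg (O : Set (Term n)) (hO : IsOrderIdeal O)
    (hinf : O.Infinite)
    (g : Term n → MvPolynomial (Fin (n + 1)) K) (hg : IsPrebasis O g) :
    IsBorderBasisOf O g (idealG O g) ↔
      ∀ d : ℕ, minDegBorder O - 1 ≤ d → ∀ r s : Fin (n + 1), r < s →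
        multMatrix O g r (d + 1) * multMatrix O g s d =
          multMatrix O g s (d + 1) * multMatrix O g r d := by
  have key := main_iff (K := K) hO hg
  constructor
  · intro hBB
    exact key.1 hBB.2.2
  · intro hyp
    exact ⟨hg, fun σ hσ => Ideal.subset_span ⟨σ, hσ, rfl⟩, key.2 hyp⟩

end Border
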